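/- Let s_1, s_2, s_3 ∈ ℂ with Re s_1 > 3, Re s_2 > 3, Re s_3 > 3, and write Z(a,b,c) = ∑_{m≥1}∑_{n≥1} m^{−a} n^{−b} (m+n)^{−c} (all the series below converge absolutely). Then (s_2−1)(s_1−s_3)·Z(s_1,s_2,s_3) − s_3(2−s_1−s_2+s_3)·Z(s_1,s_2−1,s_3+1) + s_3(s_3+1)·Z(s_1,s_2−2,s_3+2) + s_1(s_2−s_3−1)·Z(s_1+1,s_2−1,s_3) − s_1(s_2−1)·Z(s_1+1,s_2,s_3−1) + s_1 s_3 · Z(s_1+1,s_2−2,s_3+1) + (s_2−1)s_3 · Z(s_1−1,s_2,s_3+1) + s_3(s_3+1)·Z(s_1−1,s_2−1,s_3+2) = 0. (Identity (4.5) for the Mordell–Tornheim double zeta-function, arising from the coefficient of a in the generating function of Example 4.2.) -/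

import Mathlib

open Complex

/-- The Mordell–Tornheim double zeta-function
`ζ_{MT,2}(a,b,c) = ∑_{m,n ≥ 1} m^{-a} n^{-b} (m+n)^{-c}`. -/
noncomputable def mordellTornheim2 (a b c : ℂ) : ℂ :=
  ∑' p : ℕ × ℕ,
    ((p.1 : ℂ) + 1) ^ (-a) * ((p.2 : ℂ) + 1) ^ (-b) *
      ((p.1 : ℂ) + (p.2 : ℂ) + 2) ^ (-c)

/-- Summability of the Mordell–Tornheim summand. -/
lemma mt2_summable {a b c : ℂ} (ha : 1 < a.re) (hb : 1 < b.re) (hc : 0 < c.re) :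
    Summable (fun p : ℕ × ℕ =>
      ((p.1 : ℂ) + 1) ^ (-a) * ((p.2 : ℂ) + 1) ^ (-b) *
        ((p.1 : ℂ) + (p.2 : ℂ) + 2) ^ (-c)) := by
  have hs : ∀ r : ℝ, 1 < r → Summable (fun n : ℕ => ((n : ℝ) + 1) ^ (-r)) := by
    intro r hr
    have := Real.summable_nat_rpow (p := -r) |>.mpr (by linarith)
    have h2 := (summable_nat_add_iff 1).mpr this
    refine h2.congr fun n => ?_
    push_cast
    ring_nf
  have hsum : Summable (fun p : ℕ × ℕ =>
      ((p.1 : ℝ) + 1) ^ (-a.re) * ((p.2 : ℝ) + 1) ^ (-b.re)) :=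
    (hs a.re ha).mul_of_nonneg (hs b.re hb)
      (fun n => Real.rpow_nonneg (by positivity) _)
      (fun n => Real.rpow_nonneg (by positivity) _)
  refine Summable.of_norm (hsum.of_nonneg_of_le (fun p => norm_nonneg _) fun p => ?_)
  have hx : (0:ℝ) < (p.1 : ℝ) + 1 := by positivity
  have hy : (0:ℝ) < (p.2 : ℝ) + 1 := by positivity
  have hz : (0:ℝ) < (p.1 : ℝ) + (p.2 : ℝ) + 2 := by positivity
  have e1 : ((p.1 : ℂ) + 1) = (((p.1 : ℝ) + 1 : ℝ) : ℂ) := by push_cast; ring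
  have e2 : ((p.2 : ℂ) + 1) = (((p.2 : ℝ) + 1 : ℝ) : ℂ) := by push_cast; ring
  have e3 : ((p.1 : ℂ) + (p.2 : ℂ) + 2) = (((p.1 : ℝ) + (p.2 : ℝ) + 2 : ℝ) : ℂ) := by
    push_cast; ring
  rw [norm_mul, norm_mul, e1, e2, e3,
    Complex.norm_cpow_eq_rpow_re_of_pos hx,
    Complex.norm_cpow_eq_rpow_re_of_pos hy, Complex.norm_cpow_eq_rpow_re_of_pos hz,
    Complex.neg_re, Complex.neg_re, Complex.neg_re]
  have hle : ((p.1 : ℝ) + (p.2 : ℝ) + 2) ^ (-c.re) ≤ 1 :=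
    Real.rpow_le_one_of_one_le_of_nonpos (by linarith) (by linarith)
  calc ((p.1:ℝ)+1) ^ (-a.re) * ((p.2:ℝ)+1) ^ (-b.re) * ((p.1:ℝ)+(p.2:ℝ)+2) ^ (-c.re)
      ≤ ((p.1:ℝ)+1) ^ (-a.re) * ((p.2:ℝ)+1) ^ (-b.re) * 1 := by
        apply mul_le_mul_of_nonneg_left hle (by positivity)
    _ = ((p.1:ℝ)+1) ^ (-a.re) * ((p.2:ℝ)+1) ^ (-b.re) := by ring

lemma cpow_shift {w : ℂ} (hw : w ≠ 0) (t : ℂ) (n : ℕ) :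
    w ^ (-t) = w ^ (-(t + n)) * w ^ n := by
  rw [← Complex.cpow_natCast w n, ← Complex.cpow_add _ _ hw]
  congr 1
  ring

lemma mt2_pointwise (s₁ s₂ s₃ : ℂ) (p : ℕ × ℕ) :
    (s₂ - 1) * (s₁ - s₃) * (((p.1 : ℂ) + 1) ^ (-s₁) * ((p.2 : ℂ) + 1) ^ (-s₂) *
        ((p.1 : ℂ) + (p.2 : ℂ) + 2) ^ (-s₃))
    - s₃ * (2 - s₁ - s₂ + s₃) * (((p.1 : ℂ) + 1) ^ (-s₁) * ((p.2 : ℂ) + 1) ^ (-(s₂-1)) *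
        ((p.1 : ℂ) + (p.2 : ℂ) + 2) ^ (-(s₃+1)))
    + s₃ * (s₃ + 1) * (((p.1 : ℂ) + 1) ^ (-s₁) * ((p.2 : ℂ) + 1) ^ (-(s₂-2)) *
        ((p.1 : ℂ) + (p.2 : ℂ) + 2) ^ (-(s₃+2)))
    + s₁ * (s₂ - s₃ - 1) * (((p.1 : ℂ) + 1) ^ (-(s₁+1)) * ((p.2 : ℂ) + 1) ^ (-(s₂-1)) *
        ((p.1 : ℂ) + (p.2 : ℂ) + 2) ^ (-s₃))
    - s₁ * (s₂ - 1) * (((p.1 : ℂ) + 1) ^ (-(s₁+1)) * ((p.2 : ℂ) + 1) ^ (-s₂) *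
        ((p.1 : ℂ) + (p.2 : ℂ) + 2) ^ (-(s₃-1)))
    + s₁ * s₃ * (((p.1 : ℂ) + 1) ^ (-(s₁+1)) * ((p.2 : ℂ) + 1) ^ (-(s₂-2)) *
        ((p.1 : ℂ) + (p.2 : ℂ) + 2) ^ (-(s₃+1)))
    + (s₂ - 1) * s₃ * (((p.1 : ℂ) + 1) ^ (-(s₁-1)) * ((p.2 : ℂ) + 1) ^ (-s₂) *
        ((p.1 : ℂ) + (p.2 : ℂ) + 2) ^ (-(s₃+1)))
    + s₃ * (s₃ + 1) * (((p.1 : ℂ) + 1) ^ (-(s₁-1)) * ((p.2 : ℂ) + 1) ^ (-(s₂-1)) *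
        ((p.1 : ℂ) + (p.2 : ℂ) + 2) ^ (-(s₃+2))) = 0 := by
  have hre : ∀ z : ℂ, 0 < z.re → z ≠ 0 := fun z h hz => by simp [hz] at h
  have hx : ((p.1 : ℂ) + 1) ≠ 0 := hre _ (by simp; positivity)
  have hy : ((p.2 : ℂ) + 1) ≠ 0 := hre _ (by simp; positivity)
  have hz : ((p.1 : ℂ) + (p.2 : ℂ) + 2) ≠ 0 := hre _ (by simp; positivity)
  have hzxy : ((p.1 : ℂ) + (p.2 : ℂ) + 2) = ((p.1 : ℂ) + 1) + ((p.2 : ℂ) + 1) := by ring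
  rw [cpow_shift hx s₁ 1, cpow_shift hx (s₁ - 1) 2,
      cpow_shift hy (s₂ - 1) 1, cpow_shift hy (s₂ - 2) 2,
      cpow_shift hz s₃ 2, cpow_shift hz (s₃ + 1) 1, cpow_shift hz (s₃ - 1) 3]
  push_cast
  rw [show s₁ - 1 + 2 = s₁ + 1 by ring, show s₂ - 1 + 1 = s₂ by ring,
      show s₂ - 2 + 2 = s₂ by ring, show s₃ + 1 + 1 = s₃ + 2 by ring,
      show s₃ - 1 + 3 = s₃ + 2 by ring, hzxy]
  ring

/-- Identity (4.5) for the Mordell–Tornheim double zeta-function (coefficient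
of `a` in the generating function of Example 4.2). -/
theorem mordellTornheim2_identity_a (s₁ s₂ s₃ : ℂ)
    (h₁ : 3 < s₁.re) (h₂ : 3 < s₂.re) (h₃ : 3 < s₃.re) :
    (s₂ - 1) * (s₁ - s₃) * mordellTornheim2 s₁ s₂ s₃
      - s₃ * (2 - s₁ - s₂ + s₃) * mordellTornheim2 s₁ (s₂ - 1) (s₃ + 1)
      + s₃ * (s₃ + 1) * mordellTornheim2 s₁ (s₂ - 2) (s₃ + 2)
      + s₁ * (s₂ - s₃ - 1) * mordellTornheim2 (s₁ + 1) (s₂ - 1) s₃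
      - s₁ * (s₂ - 1) * mordellTornheim2 (s₁ + 1) s₂ (s₃ - 1)
      + s₁ * s₃ * mordellTornheim2 (s₁ + 1) (s₂ - 2) (s₃ + 1)
      + (s₂ - 1) * s₃ * mordellTornheim2 (s₁ - 1) s₂ (s₃ + 1)
      + s₃ * (s₃ + 1) * mordellTornheim2 (s₁ - 1) (s₂ - 1) (s₃ + 2) = 0 := by
  have re1 : ∀ t : ℂ, (t - 1).re = t.re - 1 := fun t => by simp
  have re2 : ∀ t : ℂ, (t - 2).re = t.re - 2 := fun t => by simp
  have rp1 : ∀ t : ℂ, (t + 1).re = t.re + 1 := fun t => by simp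
  have rp2 : ∀ t : ℂ, (t + 2).re = t.re + 2 := fun t => by simp
  have h1 : HasSum _ (mordellTornheim2 s₁ s₂ s₃) :=
    (mt2_summable (by linarith) (by linarith) (by linarith)).hasSum
  have h2 : HasSum _ (mordellTornheim2 s₁ (s₂ - 1) (s₃ + 1)) :=
    (mt2_summable (by linarith) (by rw [re1]; linarith) (by rw [rp1]; linarith)).hasSum
  have h3 : HasSum _ (mordellTornheim2 s₁ (s₂ - 2) (s₃ + 2)) :=
    (mt2_summable (by linarith) (by rw [re2]; linarith) (by rw [rp2]; linarith)).hasSum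
  have h4 : HasSum _ (mordellTornheim2 (s₁ + 1) (s₂ - 1) s₃) :=
    (mt2_summable (by rw [rp1]; linarith) (by rw [re1]; linarith) (by linarith)).hasSum
  have h5 : HasSum _ (mordellTornheim2 (s₁ + 1) s₂ (s₃ - 1)) :=
    (mt2_summable (by rw [rp1]; linarith) (by linarith) (by rw [re1]; linarith)).hasSum
  have h6 : HasSum _ (mordellTornheim2 (s₁ + 1) (s₂ - 2) (s₃ + 1)) :=
    (mt2_summable (by rw [rp1]; linarith) (by rw [re2]; linarith)
      (by rw [rp1]; linarith)).hasSum
  have h7 : HasSum _ (mordellTornheim2 (s₁ - 1) s₂ (s₃ + 1)) :=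
    (mt2_summable (by rw [re1]; linarith) (by linarith) (by rw [rp1]; linarith)).hasSum
  have h8 : HasSum _ (mordellTornheim2 (s₁ - 1) (s₂ - 1) (s₃ + 2)) :=
    (mt2_summable (by rw [re1]; linarith) (by rw [re1]; linarith)
      (by rw [rp2]; linarith)).hasSum
  have H := (((((((h1.mul_left ((s₂ - 1) * (s₁ - s₃))).sub
      (h2.mul_left (s₃ * (2 - s₁ - s₂ + s₃)))).add
      (h3.mul_left (s₃ * (s₃ + 1)))).add
      (h4.mul_left (s₁ * (s₂ - s₃ - 1)))).sub
      (h5.mul_left (s₁ * (s₂ - 1)))).add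
      (h6.mul_left (s₁ * s₃))).add
      (h7.mul_left ((s₂ - 1) * s₃))).add
      (h8.mul_left (s₃ * (s₃ + 1)))
  refine H.unique ?_
  convert hasSum_zero using 1
  funext p
  simpa using mt2_pointwise s₁ s₂ s₃ p
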